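/- In the graph G = K_n * K_d * K_m obtained from complete graphs K_n, K_d, K_m by joining every vertex of K_n to every vertex of K_d and every vertex of K_d to every vertex of K_m (with n > m ≥ 1, d ≥ 1), any x ∈ V(K_n) and y ∈ V(K_m) satisfy d(x,y) = 2, |W_{x 2 y}| = n, and |W_{y 2 x}| = m; hence G restricted to such pairs witnesses the quasi-(n/m, 2)-distance-balanced property. -/

import Mathlib

open SimpleGraph

/-- `wSetN G n u v` is the set of vertices strictly closer to `u` than to `v`
(used for pairs `u`, `v` at distance `n`). -/
def wSetN {V : Type*} (G : SimpleGraph V) (n : ℕ) (u v : V) : Set V :=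
  {x | G.dist x u < G.dist x v}

/-- The layer (0, 1 or 2) of a vertex of `Fin n ⊕ Fin d ⊕ Fin m`. -/
def layer3 {n d m : ℕ} : Fin n ⊕ Fin d ⊕ Fin m → ℕ :=
  Sum.elim (fun _ => 0) (Sum.elim (fun _ => 1) (fun _ => 2))

/-- The graph `Kₙ * K_d * Kₘ`: three cliques of sizes `n`, `d`, `m` with every
vertex of the first clique joined to every vertex of the middle clique, and
every vertex of the middle clique joined to every vertex of the last clique. -/
def trijoin (n d m : ℕ) : SimpleGraph (Fin n ⊕ Fin d ⊕ Fin m) where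
  Adj x y := x ≠ y ∧
    (layer3 x = layer3 y ∨ layer3 x = layer3 y + 1 ∨ layer3 y = layer3 x + 1)
  symm := by
    constructor
    intro x y h
    exact ⟨h.1.symm, by tauto⟩
  loopless := by constructor; intro x h; exact h.1 rfl

lemma trijoin_adj {n d m : ℕ} {a b : Fin n ⊕ Fin d ⊕ Fin m} (hne : a ≠ b)
    (h : layer3 a = layer3 b ∨ layer3 a = layer3 b + 1 ∨ layer3 b = layer3 a + 1) :
    (trijoin n d m).Adj a b := ⟨hne, h⟩

lemma dist_le_one_of_ne_or_adj {n d m : ℕ} {a b : Fin n ⊕ Fin d ⊕ Fin m}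
    (h : layer3 a = layer3 b ∨ layer3 a = layer3 b + 1 ∨ layer3 b = layer3 a + 1) :
    (trijoin n d m).dist a b ≤ 1 := by
  by_cases hab : a = b
  · subst hab; simp [SimpleGraph.dist_self]
  · exact le_of_eq ((dist_eq_one_iff_adj).2 (trijoin_adj hab h))

lemma dist02 {n d m : ℕ} (hd : 1 ≤ d) (a : Fin n) (b : Fin m) :
    (trijoin n d m).dist (.inl a) (.inr (.inr b)) = 2 := by
  have h1 : (trijoin n d m).Adj (.inl a) (.inr (.inl ⟨0, hd⟩)) :=
    trijoin_adj (by simp) (by simp [layer3])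
  have h2 : (trijoin n d m).Adj (.inr (.inl ⟨0, hd⟩)) (.inr (.inr b)) :=
    trijoin_adj (by simp) (by simp [layer3])
  have hle : (trijoin n d m).dist (.inl a) (.inr (.inr b)) ≤ 2 := by
    have := SimpleGraph.dist_le (Walk.cons h1 (Walk.cons h2 Walk.nil))
    simpa using this
  have hne0 : (trijoin n d m).dist (.inl a) (.inr (.inr b)) ≠ 0 := by
    rw [SimpleGraph.dist_ne_zero_iff_ne_and_reachable]
    exact ⟨by simp, ⟨Walk.cons h1 (Walk.cons h2 Walk.nil)⟩⟩
  have hne1 : (trijoin n d m).dist (.inl a) (.inr (.inr b)) ≠ 1 := by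
    intro h
    rcases (SimpleGraph.dist_eq_one_iff_adj.mp h) with ⟨-, h'⟩
    simp [layer3] at h' 
  omega

lemma dist02' {n d m : ℕ} (hd : 1 ≤ d) (a : Fin n) (b : Fin m) :
    (trijoin n d m).dist (.inr (.inr b)) (.inl a) = 2 := by
  rw [SimpleGraph.dist_comm]; exact dist02 hd a b

lemma wset_left {n d m : ℕ} (hd : 1 ≤ d) (x : Fin n) (y : Fin m) :
    wSetN (trijoin n d m) 2 (.inl x) (.inr (.inr y)) = Set.range Sum.inl := by
  ext w
  simp only [wSetN, Set.mem_setOf_eq, Set.mem_range]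
  constructor
  · rintro h
    rcases w with a | c | b
    · exact ⟨a, rfl⟩
    · have h1 : (trijoin n d m).dist (.inr (.inl c)) (.inl x) ≤ 1 :=
        dist_le_one_of_ne_or_adj (by simp [layer3])
      have h2 : (trijoin n d m).dist (.inr (.inl c)) (.inl x) ≠ 0 := by
        rw [SimpleGraph.dist_ne_zero_iff_ne_and_reachable]
        exact ⟨by simp, ⟨Walk.cons (trijoin_adj (by simp) (by simp [layer3])) Walk.nil⟩⟩
      have h2' : (trijoin n d m).dist (.inr (.inl c)) (.inr (.inr y)) ≤ 1 :=
        dist_le_one_of_ne_or_adj (by simp [layer3])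
      omega
    · have h1 := dist02' hd x b
      have h2 : (trijoin n d m).dist (.inr (.inr b)) (.inr (.inr y)) ≤ 1 :=
        dist_le_one_of_ne_or_adj (by simp [layer3])
      omega
  · rintro ⟨a, rfl⟩
    have h1 : (trijoin n d m).dist (.inl a) (.inl x) ≤ 1 :=
      dist_le_one_of_ne_or_adj (by simp [layer3])
    have h2 := dist02 hd a y
    omega

lemma wset_right {n d m : ℕ} (hd : 1 ≤ d) (x : Fin n) (y : Fin m) :
    wSetN (trijoin n d m) 2 (.inr (.inr y)) (.inl x) =
      Set.range (fun b : Fin m => Sum.inr (Sum.inr b)) := by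
  ext w
  simp only [wSetN, Set.mem_setOf_eq, Set.mem_range]
  constructor
  · rintro h
    rcases w with a | c | b
    · have h1 := dist02 hd a y
      have h2 : (trijoin n d m).dist (.inl a) (.inl x) ≤ 1 :=
        dist_le_one_of_ne_or_adj (by simp [layer3])
      omega
    · have h1 : (trijoin n d m).dist (.inr (.inl c)) (.inr (.inr y)) ≤ 1 :=
        dist_le_one_of_ne_or_adj (by simp [layer3])
      have h2 : (trijoin n d m).dist (.inr (.inl c)) (.inr (.inr y)) ≠ 0 := by
        rw [SimpleGraph.dist_ne_zero_iff_ne_and_reachable]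
        exact ⟨by simp, ⟨Walk.cons (trijoin_adj (by simp) (by simp [layer3])) Walk.nil⟩⟩
      have h2' : (trijoin n d m).dist (.inr (.inl c)) (.inl x) ≤ 1 :=
        dist_le_one_of_ne_or_adj (by simp [layer3])
      omega
    · exact ⟨b, rfl⟩
  · rintro ⟨b, rfl⟩
    have h1 : (trijoin n d m).dist (.inr (.inr b)) (.inr (.inr y)) ≤ 1 :=
      dist_le_one_of_ne_or_adj (by simp [layer3])
    have h2 := dist02' hd x b
    omega

/-- In `G = Kₙ * K_d * Kₘ` with `n > m ≥ 1`, `d ≥ 1`, every `x ∈ Kₙ` and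
`y ∈ Kₘ` satisfy `d(x,y) = 2`, `|W_{x 2 y}| = n` and `|W_{y 2 x}| = m`, so such
pairs witness the quasi-`(n/m, 2)`-distance-balanced property. -/
theorem stmt19 (n d m : ℕ) (hm : 1 ≤ m) (hnm : m < n) (hd : 1 ≤ d)
    (x : Fin n) (y : Fin m) :
    (trijoin n d m).dist (.inl x) (.inr (.inr y)) = 2 ∧
    (wSetN (trijoin n d m) 2 (.inl x) (.inr (.inr y))).ncard = n ∧
    (wSetN (trijoin n d m) 2 (.inr (.inr y)) (.inl x)).ncard = m ∧
    ((wSetN (trijoin n d m) 2 (.inl x) (.inr (.inr y))).ncard : ℚ) =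
      ((n : ℚ) / (m : ℚ)) *
        ((wSetN (trijoin n d m) 2 (.inr (.inr y)) (.inl x)).ncard : ℚ) := by
  have hL : (wSetN (trijoin n d m) 2 (.inl x) (.inr (.inr y))).ncard = n := by
    rw [wset_left hd x y, ← Set.image_univ,
      Set.ncard_image_of_injective _ Sum.inl_injective, Set.ncard_univ]
    simp
  have hR : (wSetN (trijoin n d m) 2 (.inr (.inr y)) (.inl x)).ncard = m := by
    have hinj : Function.Injective
        (fun b : Fin m => (Sum.inr (Sum.inr b) : Fin n ⊕ Fin d ⊕ Fin m)) :=
      fun a b hab => by simpa using hab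
    rw [wset_right hd x y, ← Set.image_univ,
      Set.ncard_image_of_injective _ hinj, Set.ncard_univ]
    simp
  refine ⟨dist02 hd x y, hL, hR, ?_⟩
  rw [hL, hR]
  have hm0 : (m : ℚ) ≠ 0 := by positivity
  field_simp
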